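/- Attainment of the maximal agreement set for stable sets: let H ⊆ L⁰(X)×L⁰ be a stable set, and for (x,t)∈L⁰(X)×L⁰ define A(x,t) = sup{A∈𝓕 : 1_A·(x,t) ∈ 1_A·H}, the essential supremum being taken in the measure algebra of (Ω,𝓕,μ). Then the supremum is attained: 1_{A(x,t)}·(x,t) ∈ 1_{A(x,t)}·H. -/

import Mathlib

/-!
Common setting: `(Ω, 𝓕, μ)` is a σ-finite measure space.  `L̄⁰` is formalized as
`Ω →ₘ[μ] EReal`, the space of a.e.-equivalence classes of (strongly a.e.) measurable
extended-real-valued functions, equipped with the pointwise a.e. order; `L⁰ = Ω →ₘ[μ] ℝ`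
and, for a Banach space `X`, `L⁰(X) = Ω →ₘ[μ] X` (a.e.-classes of strongly measurable
functions).  Suprema/infima in `L̄⁰` are essential suprema/infima, i.e. least upper /
greatest lower bounds for the a.e. order.
-/

open MeasureTheory Filter Set Topology Function
noncomputable section

namespace VecDual

variable {Ω : Type} [MeasurableSpace Ω] (μ : Measure Ω)

/-- coercion `L⁰ → L̄⁰` -/
def coeE (a : Ω →ₘ[μ] ℝ) : Ω →ₘ[μ] EReal := a.comp Real.toEReal continuous_coe_real_ereal

/-- negation on `L̄⁰` -/
def negE (e : Ω →ₘ[μ] EReal) : Ω →ₘ[μ] EReal := e.comp Neg.neg continuous_neg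

lemma cont_coe_sub : Continuous (Function.uncurry fun (r : ℝ) (v : EReal) => (r : EReal) + (-v)) := by
  have heq : (Function.uncurry fun (r : ℝ) (v : EReal) => (r : EReal) + (-v))
      = (fun q : EReal × EReal => q.1 + q.2) ∘ (fun p : ℝ × EReal => ((p.1 : EReal), -p.2)) := by
    funext p; rfl
  rw [heq]
  have h1 : Continuous fun p : ℝ × EReal => (((p.1 : EReal)), -p.2) :=
    (continuous_coe_real_ereal.comp continuous_fst).prodMk (continuous_neg.comp continuous_snd)
  rw [continuous_iff_continuousAt]
  intro p
  exact (EReal.continuousAt_add (Or.inl (by simp)) (Or.inl (by simp))).comp h1.continuousAt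

/-- `a - e` : subtraction of an extended value from a (finite) real value, in `L̄⁰` -/
def rsub (a : Ω →ₘ[μ] ℝ) (e : Ω →ₘ[μ] EReal) : Ω →ₘ[μ] EReal :=
  AEEqFun.comp₂ (fun (r : ℝ) (v : EReal) => (r : EReal) + (-v)) cont_coe_sub a e

/-- addition on `EReal` with the convention `(+∞) + (-∞) = +∞` -/
def pAdd (a b : EReal) : EReal := if a = ⊤ ∨ b = ⊤ then ⊤ else a + b

lemma measurable_pAdd : Measurable (Function.uncurry pAdd) := by
  have h : Function.uncurry pAdd = fun p : EReal × EReal =>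
      if p.1 = ⊤ ∨ p.2 = ⊤ then (⊤ : EReal) else
        if p.1 = ⊥ ∨ p.2 = ⊥ then (⊥ : EReal) else ((p.1.toReal + p.2.toReal : ℝ) : EReal) := by
    funext p
    rcases p with ⟨a, b⟩
    simp only [Function.uncurry, pAdd]
    induction a using EReal.rec <;> induction b using EReal.rec <;>
      simp [← EReal.coe_add]
  rw [h]
  apply Measurable.ite
  · exact (measurable_fst (measurableSet_singleton ⊤)).union
      (measurable_snd (measurableSet_singleton ⊤))
  · exact measurable_const
  apply Measurable.ite
  · exact (measurable_fst (measurableSet_singleton ⊥)).union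
      (measurable_snd (measurableSet_singleton ⊥))
  · exact measurable_const
  · exact measurable_coe_real_ereal.comp
      ((measurable_ereal_toReal.comp measurable_fst).add
        (measurable_ereal_toReal.comp measurable_snd))

/-- addition on `L̄⁰`, with the convention `(+∞) + (-∞) = +∞` -/
def addE (e₁ e₂ : Ω →ₘ[μ] EReal) : Ω →ₘ[μ] EReal :=
  AEEqFun.comp₂Measurable pAdd measurable_pAdd e₁ e₂

/-- essential supremum (least upper bound for the a.e. order) of a set in `L̄⁰` -/
def eSup (s : Set (Ω →ₘ[μ] EReal)) : Ω →ₘ[μ] EReal := by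
  classical exact if h : ∃ b, IsLUB s b then h.choose else AEEqFun.const Ω (⊤ : EReal)

/-- essential infimum (greatest lower bound for the a.e. order) of a set in `L̄⁰` -/
def eInf (s : Set (Ω →ₘ[μ] EReal)) : Ω →ₘ[μ] EReal := by
  classical exact if h : ∃ b, IsGLB s b then h.choose else AEEqFun.const Ω (⊤ : EReal)

/-- `t ∈ L⁰₊₊`, i.e. `t > 0` (a.e.) pointwise -/
def posL (t : Ω →ₘ[μ] ℝ) : Prop := ∀ᵐ ω ∂μ, 0 < t ω

/-- a countable measurable partition of `Ω` (up to null sets) -/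
def isPart (A : ℕ → Set Ω) : Prop :=
  (∀ n, MeasurableSet (A n)) ∧ Pairwise (Function.onFun Disjoint A) ∧ ∀ᵐ ω ∂μ, ∃ n, ω ∈ A n

/-- two classes agree a.e. on the set `A` -/
def agreeOn {γ : Type*} [TopologicalSpace γ] (f g : Ω →ₘ[μ] γ) (A : Set Ω) : Prop :=
  ∀ᵐ ω ∂μ, ω ∈ A → f ω = g ω

/-- the conditional Euclidean topology `τ` on `L⁰`, generated by the balls
`{a : |a - b| < t}`, `b ∈ L⁰`, `t ∈ L⁰₊₊` -/
def tauT : TopologicalSpace (Ω →ₘ[μ] ℝ) :=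
  .generateFrom {G | ∃ (b : Ω →ₘ[μ] ℝ) (t : Ω →ₘ[μ] ℝ), posL μ t ∧
    G = {a | ∀ᵐ ω ∂μ, |a ω - b ω| < t ω}}

section Pairing

variable {X Y : Type} [NormedAddCommGroup X] [NormedSpace ℝ X]
  [NormedAddCommGroup Y] [NormedSpace ℝ Y] (B : X →L[ℝ] Y →L[ℝ] ℝ)

/-- the extension of the duality pairing to `L⁰(X) × L⁰(Y) → L⁰`, computed pointwise a.e. -/
def pairL (x : Ω →ₘ[μ] X) (y : Ω →ₘ[μ] Y) : Ω →ₘ[μ] ℝ :=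
  AEEqFun.comp₂ (fun a b => B a b) B.continuous₂ x y

/-- the embedding of `X` into `L⁰(X)` by constant (deterministic) classes -/
def cst (x : X) : Ω →ₘ[μ] X := AEEqFun.const Ω x

/-- the weak topology `σ(X,Y)` on `X` induced by the pairing `B` -/
def weakT : TopologicalSpace X :=
  TopologicalSpace.induced (fun x => fun y => B x y) Pi.topologicalSpace

/-- `(X, Y, B)` is a dual pairing of Banach spaces as required: `|⟨x,y⟩| ≤ ‖x‖‖y‖`,
the pairing separates points, and norm-closed balls are weakly closed -/
structure IsDualPairing : Prop where
  bound : ∀ (x : X) (y : Y), |B x y| ≤ ‖x‖ * ‖y‖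
  sep_left : ∀ x : X, (∀ y : Y, B x y = 0) → x = 0
  sep_right : ∀ y : Y, (∀ x : X, B x y = 0) → y = 0
  closedBall_left : ∀ r : ℝ, IsClosed[weakT B] {x : X | ‖x‖ ≤ r}
  closedBall_right : ∀ r : ℝ, IsClosed[weakT B.flip] {y : Y | ‖y‖ ≤ r}

/-- a basic conditional weak neighborhood `V^t_{y₁,…,y_m}` of `0` in `L⁰(X)` -/
def basicN {m : ℕ} (ys : Fin m → Ω →ₘ[μ] Y) (t : Ω →ₘ[μ] ℝ) : Set (Ω →ₘ[μ] X) :=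
  {x | ∀ k, ∀ᵐ ω ∂μ, |pairL μ B x (ys k) ω| < t ω}

/-- the concatenations of basic neighborhoods along countable measurable partitions -/
def concatSets : Set (Set (Ω →ₘ[μ] X)) :=
  {C | ∃ (A : ℕ → Set Ω), isPart μ A ∧
    ∃ (m : ℕ → ℕ) (ys : ∀ n, Fin (m n) → Ω →ₘ[μ] Y) (ts : ℕ → Ω →ₘ[μ] ℝ),
      (∀ n, posL μ (ts n)) ∧
      C = {x | ∀ n, ∃ x' ∈ basicN μ B (ys n) (ts n), agreeOn μ x x' (A n)}}

/-- the conditional weak topology `σ(L⁰(X), L⁰(Y))`: the translates of the concatenations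
of basic neighborhoods form a local base at every point -/
def sigmaT : TopologicalSpace (Ω →ₘ[μ] X) :=
  .generateFrom {G | ∃ (x₀ : Ω →ₘ[μ] X) (C : Set (Ω →ₘ[μ] X)), C ∈ concatSets μ B ∧
    G = {x | x - x₀ ∈ C}}

/-- the product topology of `σ(L⁰(X),L⁰(Y))` and `τ` on `L⁰(X) × L⁰` -/
def sigTauT : TopologicalSpace ((Ω →ₘ[μ] X) × (Ω →ₘ[μ] ℝ)) :=
  @instTopologicalSpaceProd _ _ (sigmaT μ B) (tauT μ)

/-- membership in `L⁰_s(X)`: `x` is a step function subordinate to the partition `A`,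
with values `xs` -/
def stepMem (x : Ω →ₘ[μ] X) (A : ℕ → Set Ω) (xs : ℕ → X) : Prop :=
  ∀ n, agreeOn μ x (cst μ (xs n)) (A n)

/-- `L⁰_s(U)`: the set of step functions with values in `U ⊆ X` -/
def stepSet (U : Set X) : Set (Ω →ₘ[μ] X) :=
  {x | ∃ A xs, isPart μ A ∧ (∀ n, xs n ∈ U) ∧ stepMem μ x A xs}

/-- the epigraph of the step extension `F_s : L⁰_s(X) → L̄⁰` of `f : X → L̄⁰`, as a
subset of `L⁰(X) × L⁰` -/
def stepEpi (f : X → Ω →ₘ[μ] EReal) : Set ((Ω →ₘ[μ] X) × (Ω →ₘ[μ] ℝ)) :=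
  {p | ∃ A xs, isPart μ A ∧ stepMem μ p.1 A xs ∧
    ∀ n, ∀ᵐ ω ∂μ, ω ∈ A n → f (xs n) ω ≤ (p.2 ω : EReal)}

/-- `f : X → L̄⁰` is s-lower semi-continuous: the epigraph of its step extension is closed
in `L⁰_s(X) × L⁰` with respect to the (relative) product of `σ(L⁰(X),L⁰(Y))` and `τ` -/
def sLSC (f : X → Ω →ₘ[μ] EReal) : Prop :=
  @closure _ (sigTauT μ B) (stepEpi μ f) ∩ {p | p.1 ∈ stepSet μ (univ : Set X)} ⊆ stepEpi μ f

/-- `U ⊆ X` is s-closed: `L⁰_s(U)` is closed in `L⁰_s(X)` with respect to the relative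
`σ(L⁰(X),L⁰(Y))`-topology -/
def sClosed (U : Set X) : Prop :=
  @closure _ (sigmaT μ B) (stepSet μ U) ∩ stepSet μ (univ : Set X) ⊆ stepSet μ U

/-- `f : X → L̄⁰` is proper: `f > -∞` everywhere and `f(x₀) < +∞` for some `x₀` -/
def ProperV {E : Type*} (f : E → Ω →ₘ[μ] EReal) : Prop :=
  (∀ x : E, ∀ᵐ ω ∂μ, ⊥ < f x ω) ∧ ∃ x₀ : E, ∀ᵐ ω ∂μ, f x₀ ω < ⊤

/-- `f : X → L̄⁰` is convex -/
def ConvexV {E : Type*} [AddCommGroup E] [Module ℝ E] (f : E → Ω →ₘ[μ] EReal) : Prop :=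
  ∀ (x₁ x₂ : E) (r : ℝ), 0 ≤ r → r ≤ 1 →
    ∀ᵐ ω ∂μ, f (r • x₁ + (1 - r) • x₂) ω ≤
      (r : EReal) * f x₁ ω + ((1 - r : ℝ) : EReal) * f x₂ ω

/-- `x ∈ dom f`, i.e. `f(x) ∈ L⁰` -/
def memDom {E : Type*} (f : E → Ω →ₘ[μ] EReal) (x : E) : Prop :=
  ∀ᵐ ω ∂μ, f x ω ≠ ⊥ ∧ f x ω ≠ ⊤

/-- the conjugate `f* : L⁰(Y) → L̄⁰` of `f : X → L̄⁰`,
`f*(y) = sup_{x ∈ X} {⟨x,y⟩ - f(x)}` -/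
def conjS (f : X → Ω →ₘ[μ] EReal) (y : Ω →ₘ[μ] Y) : Ω →ₘ[μ] EReal :=
  eSup μ {e | ∃ x : X, e = rsub μ (pairL μ B (cst μ x) y) (f x)}

/-- the conditional conjugate `F* : L⁰(Y) → L̄⁰` of `F : L⁰(X) → L̄⁰`,
`F*(y) = sup_{x ∈ L⁰(X)} {⟨x,y⟩ - F(x)}` -/
def conjL (F : (Ω →ₘ[μ] X) → Ω →ₘ[μ] EReal) (y : Ω →ₘ[μ] Y) : Ω →ₘ[μ] EReal :=
  eSup μ {e | ∃ x : Ω →ₘ[μ] X, e = rsub μ (pairL μ B x y) (F x)}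

/-- the epigraph of a function `G : L⁰(Y) → L̄⁰`, as a subset of `L⁰(Y) × L⁰` -/
def epiL (G : (Ω →ₘ[μ] Y) → Ω →ₘ[μ] EReal) : Set ((Ω →ₘ[μ] Y) × (Ω →ₘ[μ] ℝ)) :=
  {p | ∀ᵐ ω ∂μ, G p.1 ω ≤ (p.2 ω : EReal)}

end Pairing

section SLB
variable {Y : Type} [NormedAddCommGroup Y] [NormedSpace ℝ Y]

/-- `(y,t)·1_A ∈ H·1_A` : the pair `(y,t)` agrees a.e. on `A` with some member of `H` -/
def memOn (H : Set ((Ω →ₘ[μ] Y) × (Ω →ₘ[μ] ℝ))) (y : Ω →ₘ[μ] Y) (t : Ω →ₘ[μ] ℝ)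
    (A : Set Ω) : Prop :=
  ∃ q ∈ H, agreeOn μ y q.1 A ∧ agreeOn μ t q.2 A

/-- the stable lower bound function `F_H : L⁰(Y) → L̄⁰` of a set `H ⊆ L⁰(Y) × L⁰`:
the localized infimum over all pairs `(t, A)` matching `H` at `y`, equal to `+∞`
where no matching is possible -/
def slb (H : Set ((Ω →ₘ[μ] Y) × (Ω →ₘ[μ] ℝ))) (y : Ω →ₘ[μ] Y) : Ω →ₘ[μ] EReal :=
  eInf μ {e | ∃ (t : Ω →ₘ[μ] ℝ) (A : Set Ω), MeasurableSet A ∧ memOn μ H y t A ∧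
    (∀ᵐ ω ∂μ, ω ∈ A → e ω = (t ω : EReal)) ∧ (∀ᵐ ω ∂μ, ω ∉ A → e ω = ⊤)}

end SLB

section Two
variable {X W Y Z : Type} [NormedAddCommGroup X] [NormedSpace ℝ X]
  [NormedAddCommGroup W] [NormedSpace ℝ W] [NormedAddCommGroup Y] [NormedSpace ℝ Y]
  [NormedAddCommGroup Z] [NormedSpace ℝ Z]

/-- the pairing of `X × W` with `Y × Z` : `⟨(x,w),(y,z)⟩ = ⟨x,y⟩ + ⟨w,z⟩` -/
def pairProd (B : X →L[ℝ] Y →L[ℝ] ℝ) (C : W →L[ℝ] Z →L[ℝ] ℝ) :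
    (X × W) →L[ℝ] (Y × Z) →L[ℝ] ℝ :=
  ((B.comp (ContinuousLinearMap.fst ℝ X W)).flip.comp (ContinuousLinearMap.fst ℝ Y Z)).flip +
    ((C.comp (ContinuousLinearMap.snd ℝ X W)).flip.comp (ContinuousLinearMap.snd ℝ Y Z)).flip

variable (B : X →L[ℝ] Y →L[ℝ] ℝ) (C : W →L[ℝ] Z →L[ℝ] ℝ)

/-- the conjugate `Φ* : L⁰(Y) × L⁰(Z) → L̄⁰` of a perturbation function `Φ : X × W → L̄⁰`:
`Φ*(y,z) = sup_{x ∈ X, w ∈ W} {⟨x,y⟩ + ⟨w,z⟩ - Φ(x,w)}` -/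
def conj2 (Φ : X × W → Ω →ₘ[μ] EReal) (y : Ω →ₘ[μ] Y) (z : Ω →ₘ[μ] Z) : Ω →ₘ[μ] EReal :=
  eSup μ {e | ∃ (x : X) (w : W),
    e = rsub μ (pairL μ B (cst μ x) y + pairL μ C (cst μ w) z) (Φ (x, w))}

/-- the epigraph of `Φ* : L⁰(Y) × L⁰(Z) → L̄⁰` -/
def epi2 (Φ : X × W → Ω →ₘ[μ] EReal) :
    Set ((Ω →ₘ[μ] Y) × (Ω →ₘ[μ] Z) × (Ω →ₘ[μ] ℝ)) :=
  {q | ∀ᵐ ω ∂μ, conj2 μ B C Φ q.1 q.2.1 ω ≤ (q.2.2 ω : EReal)}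

/-- the projection `pr_{L⁰(Y) × L⁰}` of the epigraph of `Φ*` -/
def prEpi2 (Φ : X × W → Ω →ₘ[μ] EReal) : Set ((Ω →ₘ[μ] Y) × (Ω →ₘ[μ] ℝ)) :=
  (fun q : (Ω →ₘ[μ] Y) × (Ω →ₘ[μ] Z) × (Ω →ₘ[μ] ℝ) => (q.1, q.2.2)) '' epi2 μ B C Φ

end Two


section Stability
variable {X : Type} [NormedAddCommGroup X]

/-- `F : L⁰(X) → L̄⁰` is stable (local): it is compatible with countable concatenations
along measurable partitions -/
def StableL (F : (Ω →ₘ[μ] X) → Ω →ₘ[μ] EReal) : Prop :=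
  ∀ (A : ℕ → Set Ω), isPart μ A → ∀ (x : ℕ → Ω →ₘ[μ] X) (g : Ω →ₘ[μ] X),
    (∀ n, agreeOn μ g (x n) (A n)) → ∀ n, agreeOn μ (F g) (F (x n)) (A n)

/-- a stable set `H ⊆ L⁰(X) × L⁰`: `H` is nonempty and closed under countable
concatenations along measurable partitions -/
def StableSet (H : Set ((Ω →ₘ[μ] X) × (Ω →ₘ[μ] ℝ))) : Prop :=
  H.Nonempty ∧ ∀ (p : ℕ → (Ω →ₘ[μ] X) × (Ω →ₘ[μ] ℝ)), (∀ n, p n ∈ H) →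
    ∀ (A : ℕ → Set Ω), isPart μ A → ∀ g : (Ω →ₘ[μ] X) × (Ω →ₘ[μ] ℝ),
      (∀ n, agreeOn μ g.1 (p n).1 (A n) ∧ agreeOn μ g.2 (p n).2 (A n)) → g ∈ H

end Stability

section Adjoint
variable {X W : Type} [NormedAddCommGroup X] [NormedSpace ℝ X]
  [NormedAddCommGroup W] [NormedSpace ℝ W]

/-- the (unique uniformly continuous) extension `A* : L⁰(W*) → L⁰(X*)` of the adjoint
`A* : W* → X*` of a bounded linear operator `A : X → W`; it acts pointwise a.e. and
satisfies `⟨x, A* w*⟩ = ⟨A x, w*⟩` -/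
def adjL (A : X →L[ℝ] W) (ws : Ω →ₘ[μ] StrongDual ℝ W) :
    Ω →ₘ[μ] StrongDual ℝ X :=
  ws.comp (fun φ => ((ContinuousLinearMap.compL ℝ X W ℝ).flip A) φ)
    ((ContinuousLinearMap.compL ℝ X W ℝ).flip A).continuous

end Adjoint

section Constrained
variable {X Y : Type} [NormedAddCommGroup X] [NormedSpace ℝ X]
  [NormedAddCommGroup Y] [NormedSpace ℝ Y]

open Classical in
/-- the function `f + δ_U : X → L̄⁰`, where `δ_U` is the (convex) indicator of `U ⊆ X` -/
def addIndicator (U : Set X) (f : X → Ω →ₘ[μ] EReal) : X → Ω →ₘ[μ] EReal :=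
  fun x => if x ∈ U then f x else AEEqFun.const Ω (⊤ : EReal)

/-- the support function `δ_U* : L⁰(Y) → L̄⁰` of `U ⊆ X`, `δ_U*(y) = sup_{x ∈ U} ⟨x,y⟩` -/
def suppF (B : X →L[ℝ] Y →L[ℝ] ℝ) (U : Set X) (y : Ω →ₘ[μ] Y) : Ω →ₘ[μ] EReal :=
  eSup μ {e | ∃ x ∈ U, e = coeE μ (pairL μ B (cst μ x) y)}

end Constrained

end VecDual

open MeasureTheory VecDual

variable {Ω : Type} [MeasurableSpace Ω]


section Aux

lemma stronglyMeasurable_glue {Ω γ : Type} [MeasurableSpace Ω] [TopologicalSpace γ]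
    [TopologicalSpace.PseudoMetrizableSpace γ]
    {N : Ω → ℕ} (hN : Measurable N) {g : ℕ → Ω → γ}
    (hg : ∀ n, MeasureTheory.StronglyMeasurable (g n)) :
    MeasureTheory.StronglyMeasurable (fun ω => g (N ω) ω) := by
  classical
  set F : ℕ → Ω → γ := fun k =>
    Nat.rec (g 0) (fun m Fm => Set.piecewise (N ⁻¹' {m + 1}) (g (m + 1)) Fm) k with hF
  have hFmeas : ∀ k, MeasureTheory.StronglyMeasurable (F k) := by
    intro k
    induction k with
    | zero => exact hg 0
    | succ m ih =>
      exact MeasureTheory.StronglyMeasurable.piecewise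
        (hN (measurableSet_singleton (m + 1))) (hg (m + 1)) ih
  have hFval : ∀ (ω : Ω) (k : ℕ), N ω ≤ k → F k ω = g (N ω) ω := by
    intro ω k
    induction k with
    | zero =>
      intro h
      have h0 : N ω = 0 := Nat.le_zero.1 h
      rw [h0]
      rfl
    | succ m ih =>
      intro h
      by_cases hc : N ω = m + 1
      · show Set.piecewise (N ⁻¹' {m + 1}) (g (m + 1)) (F m) ω = g (N ω) ω
        rw [Set.piecewise_eq_of_mem _ _ _ (show ω ∈ N ⁻¹' {m + 1} from hc), hc]
      · have hle : N ω ≤ m := Nat.lt_succ_iff.1 (lt_of_le_of_ne h hc)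
        show Set.piecewise (N ⁻¹' {m + 1}) (g (m + 1)) (F m) ω = g (N ω) ω
        rw [Set.piecewise_eq_of_notMem _ _ _ (show ω ∉ N ⁻¹' {m + 1} from hc)]
        exact ih hle
  refine stronglyMeasurable_of_tendsto atTop hFmeas ?_
  rw [tendsto_pi_nhds]
  intro ω
  refine tendsto_nhds_of_eventually_eq ?_
  filter_upwards [Filter.eventually_ge_atTop (N ω)] with k hk
  exact hFval ω k hk

/-- gluing of countably many a.e.-classes along a measurable `ℕ`-indexed selection -/
def glueAE {Ω γ : Type} [MeasurableSpace Ω] {μ : Measure Ω} [TopologicalSpace γ]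
    [TopologicalSpace.PseudoMetrizableSpace γ]
    {N : Ω → ℕ} (hN : Measurable N) (f : ℕ → Ω →ₘ[μ] γ) : Ω →ₘ[μ] γ :=
  AEEqFun.mk (fun ω => ((f (N ω)).aestronglyMeasurable.mk ((f (N ω)) : Ω → γ)) ω)
    (stronglyMeasurable_glue hN
      (fun n => (f n).aestronglyMeasurable.stronglyMeasurable_mk)).aestronglyMeasurable

lemma glueAE_agree {Ω γ : Type} [MeasurableSpace Ω] {μ : Measure Ω} [TopologicalSpace γ]
    [TopologicalSpace.PseudoMetrizableSpace γ]
    {N : Ω → ℕ} (hN : Measurable N) (f : ℕ → Ω →ₘ[μ] γ) {C : Set Ω} {n : ℕ}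
    (hC : ∀ ω, ω ∈ C → N ω = n) :
    agreeOn μ (glueAE hN f) (f n) C := by
  have h1 : glueAE hN f =ᵐ[μ]
      fun ω => ((f (N ω)).aestronglyMeasurable.mk ((f (N ω)) : Ω → γ)) ω :=
    AEEqFun.coeFn_mk _ _
  have h2 : (f n : Ω → γ) =ᵐ[μ] (f n).aestronglyMeasurable.mk ((f n) : Ω → γ) :=
    (f n).aestronglyMeasurable.ae_eq_mk
  filter_upwards [h1, h2] with ω e1 e2 hω
  rw [e1, hC ω hω, ← e2]

set_option maxHeartbeats 1000000 in
lemma memOn_iUnion {Ω X : Type} [MeasurableSpace Ω] {μ : Measure Ω}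
    [NormedAddCommGroup X] [NormedSpace ℝ X]
    {H : Set ((Ω →ₘ[μ] X) × (Ω →ₘ[μ] ℝ))} (hH : StableSet μ H)
    {x : Ω →ₘ[μ] X} {t : Ω →ₘ[μ] ℝ}
    {A : ℕ → Set Ω} (hA : ∀ n, MeasurableSet (A n))
    (h : ∀ n, memOn μ H x t (A n)) :
    memOn μ H x t (⋃ n, A n) := by
  classical
  choose q hqH hq1 hq2 using h
  set D : ℕ → Set Ω := disjointed A with hD
  set C : ℕ → Set Ω := fun n => Nat.casesOn n (⋃ k, A k)ᶜ D with hCdef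
  have hDsub : ∀ n, D n ⊆ A n := fun n => disjointed_subset A n
  have hDU : (⋃ n, D n) = ⋃ n, A n := iUnion_disjointed
  have hCmeas : ∀ n, MeasurableSet (C n) := by
    intro n
    cases n with
    | zero => exact (MeasurableSet.iUnion hA).compl
    | succ m => exact MeasurableSet.disjointed hA m
  have hCdisj : Pairwise (Function.onFun Disjoint C) := by
    intro i j hij
    have key : ∀ a b : ℕ, a ≠ b → Disjoint (C a) (C b) := by
      intro a b hab
      match a, b with
      | 0, 0 => exact absurd rfl hab
      | 0, (m+1) =>
        refine Set.disjoint_left.2 fun {ω} h1 h2 => ?_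
        have hω : ω ∈ ⋃ k, A k := Set.mem_iUnion.2 ⟨m, hDsub m h2⟩
        have h1' : ω ∈ (⋃ k, A k)ᶜ := h1
        exact h1' hω
      | (m+1), 0 =>
        refine (Set.disjoint_left.2 fun {ω} h1 h2 => ?_).symm
        have hω : ω ∈ ⋃ k, A k := Set.mem_iUnion.2 ⟨m, hDsub m h2⟩
        have h1' : ω ∈ (⋃ k, A k)ᶜ := h1
        exact h1' hω
      | (m+1), (k+1) =>
        exact disjoint_disjointed A (fun hmk => hab (by rw [hmk]))
    exact key i j hij
  have hCcov : ∀ ω, ∃ n, ω ∈ C n := by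
    intro ω
    by_cases hω : ω ∈ ⋃ k, A k
    · rw [← hDU] at hω
      obtain ⟨k, hk⟩ := Set.mem_iUnion.1 hω
      exact ⟨k + 1, hk⟩
    · exact ⟨0, hω⟩
  set N : Ω → ℕ := fun ω => Nat.find (hCcov ω) with hNdef
  have hNspec : ∀ ω, ω ∈ C (N ω) := fun ω => Nat.find_spec (hCcov ω)
  have hNval : ∀ ω n, ω ∈ C n → N ω = n := by
    intro ω n hω
    by_contra hne
    exact Set.disjoint_left.1 (hCdisj hne) (hNspec ω) hω
  have hNpre : ∀ n, N ⁻¹' {n} = C n := by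
    intro n
    ext ω
    constructor
    · intro hω
      rw [Set.mem_preimage, Set.mem_singleton_iff] at hω
      rw [← hω]
      exact hNspec ω
    · intro hω
      exact hNval ω n hω
  have hN : Measurable N := by
    apply measurable_to_nat
    intro ω
    rw [hNpre]
    exact hCmeas _
  have hpH : ∀ n, (fun n => Nat.casesOn n (q 0) q :
      ℕ → (Ω →ₘ[μ] X) × (Ω →ₘ[μ] ℝ)) n ∈ H := by
    intro n; cases n with
    | zero => exact hqH 0
    | succ m => exact hqH m
  have hPart : isPart μ C := ⟨hCmeas, hCdisj, Filter.Eventually.of_forall hCcov⟩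
  set p : ℕ → (Ω →ₘ[μ] X) × (Ω →ₘ[μ] ℝ) := fun n => Nat.casesOn n (q 0) q with hp
  have hagree1 : ∀ n, agreeOn μ (glueAE hN fun k => (p k).1) (p n).1 (C n) :=
    fun n => glueAE_agree hN (fun k => (p k).1) (fun ω hω => hNval ω n hω)
  have hagree2 : ∀ n, agreeOn μ (glueAE hN fun k => (p k).2) (p n).2 (C n) :=
    fun n => glueAE_agree hN (fun k => (p k).2) (fun ω hω => hNval ω n hω)
  have hgH : ((glueAE hN fun k => (p k).1, glueAE hN fun k => (p k).2) :
      (Ω →ₘ[μ] X) × (Ω →ₘ[μ] ℝ)) ∈ H :=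
    hH.2 p hpH C hPart _ (fun n => ⟨hagree1 n, hagree2 n⟩)
  refine ⟨_, hgH, ?_, ?_⟩
  · have hall : ∀ᵐ ω ∂μ, ∀ n, (ω ∈ A n → x ω = (q n).1 ω) ∧
        (ω ∈ C (n + 1) → (glueAE hN fun k => (p k).1) ω = (q n).1 ω) := by
      rw [MeasureTheory.ae_all_iff]
      intro n
      filter_upwards [hq1 n, hagree1 (n + 1)] with ω h1 h2
      exact ⟨h1, h2⟩
    filter_upwards [hall] with ω hω hmem
    rw [← hDU] at hmem
    obtain ⟨n, hn⟩ := Set.mem_iUnion.1 hmem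
    have e1 := (hω n).1 (hDsub n hn)
    have e2 := (hω n).2 hn
    rw [e1]; exact e2.symm
  · have hall : ∀ᵐ ω ∂μ, ∀ n, (ω ∈ A n → t ω = (q n).2 ω) ∧
        (ω ∈ C (n + 1) → (glueAE hN fun k => (p k).2) ω = (q n).2 ω) := by
      rw [MeasureTheory.ae_all_iff]
      intro n
      filter_upwards [hq2 n, hagree2 (n + 1)] with ω h1 h2
      exact ⟨h1, h2⟩
    filter_upwards [hall] with ω hω hmem
    rw [← hDU] at hmem
    obtain ⟨n, hn⟩ := Set.mem_iUnion.1 hmem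
    have e1 := (hω n).1 (hDsub n hn)
    have e2 := (hω n).2 hn
    rw [e1]; exact e2.symm

end Aux

/-- attainment of the maximal agreement set for stable sets:
let `H ⊆ L⁰(X) × L⁰` be a stable set and `(x,t) ∈ L⁰(X) × L⁰`.  If `E` is the essential
supremum (in the measure algebra) of the family of measurable sets `A` with
`1_A·(x,t) ∈ 1_A·H`, then the supremum is attained: `1_E·(x,t) ∈ 1_E·H`. -/
theorem stable_agreement_attained {Ω : Type} [MeasurableSpace Ω] (μ : Measure Ω) [SigmaFinite μ]
    {X Y : Type}
    [NormedAddCommGroup X] [NormedSpace ℝ X] [CompleteSpace X]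
    [NormedAddCommGroup Y] [NormedSpace ℝ Y] [CompleteSpace Y]
    {B : X →L[ℝ] Y →L[ℝ] ℝ} (hB : IsDualPairing B)
    (H : Set ((Ω →ₘ[μ] X) × (Ω →ₘ[μ] ℝ))) (hH : StableSet μ H)
    (x : Ω →ₘ[μ] X) (t : Ω →ₘ[μ] ℝ)
    (E : Set Ω) (hE : MeasurableSet E)
    (hub : ∀ A : Set Ω, MeasurableSet A → memOn μ H x t A → μ (A \ E) = 0)
    (hlub : ∀ E' : Set Ω, MeasurableSet E' →
      (∀ A : Set Ω, MeasurableSet A → memOn μ H x t A → μ (A \ E') = 0) →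
      μ (E \ E') = 0) :
    memOn μ H x t E := by
  classical
  obtain ⟨ν, hνfin, hμν, hνμ⟩ := exists_isFiniteMeasure_absolutelyContinuous μ
  set P : Set Ω → Prop := fun A => MeasurableSet A ∧ memOn μ H x t A with hP
  set c : ENNReal := ⨆ (A : Set Ω) (_ : P A), ν A with hc
  have hempty : P ∅ := by
    obtain ⟨q, hq⟩ := hH.1
    exact ⟨MeasurableSet.empty, q, hq,
      Filter.Eventually.of_forall fun ω hω => absurd hω (Set.notMem_empty ω),
      Filter.Eventually.of_forall fun ω hω => absurd hω (Set.notMem_empty ω)⟩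
  have hle : ∀ A, P A → ν A ≤ c := by
    intro A hA
    exact le_iSup_of_le A (le_iSup_of_le hA le_rfl)
  have hctop : c ≠ ⊤ := by
    refine ne_top_of_le_ne_top (measure_ne_top ν Set.univ) ?_
    exact iSup_le fun A => iSup_le fun _ => measure_mono (Set.subset_univ A)
  have hseq : ∀ j : ℕ, ∃ A, P A ∧ c ≤ ν A + (↑(j + 1))⁻¹ := by
    intro j
    by_cases hcj : c ≤ (↑(j + 1) : ENNReal)⁻¹
    · exact ⟨∅, hempty, le_add_left hcj⟩
    · push_neg at hcj
      have hεc : ((↑(j + 1) : ENNReal))⁻¹ ≤ c := le_of_lt hcj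
      have hc0 : c ≠ 0 := by
        intro h0; rw [h0] at hcj; exact (not_lt_of_ge zero_le) hcj
      have hε0 : ((↑(j + 1) : ENNReal))⁻¹ ≠ 0 := by
        simp [ENNReal.inv_ne_zero]
      have hsub : c - (↑(j + 1))⁻¹ < c :=
        ENNReal.sub_lt_self hctop hc0 hε0
      rw [hc] at hsub
      rw [lt_iSup_iff] at hsub
      obtain ⟨A, hA⟩ := hsub
      rw [lt_iSup_iff] at hA
      obtain ⟨hPA, hA⟩ := hA
      refine ⟨A, hPA, ?_⟩
      rw [ENNReal.sub_lt_iff_lt_right (by simp) hεc] at hA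
      exact le_of_lt hA
  choose A hPA hcA using hseq
  set S : Set Ω := ⋃ j, A j with hS
  have hSmeas : MeasurableSet S := MeasurableSet.iUnion fun j => (hPA j).1
  have hSmem : memOn μ H x t S := memOn_iUnion hH (fun j => (hPA j).1) (fun j => (hPA j).2)
  have hcS : c ≤ ν S := by
    refine ENNReal.le_of_forall_pos_le_add fun ε hε _ => ?_
    obtain ⟨n, hn⟩ := ENNReal.exists_inv_nat_lt (by exact_mod_cast hε.ne' : (ε : ENNReal) ≠ 0)
    calc c ≤ ν (A n) + (↑(n + 1))⁻¹ := hcA n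
      _ ≤ ν S + ε := by
          refine add_le_add (measure_mono (Set.subset_iUnion A n)) ?_
          refine le_of_lt (lt_of_le_of_lt ?_ hn)
          exact ENNReal.inv_le_inv.2 (by exact_mod_cast Nat.le_succ n)
  have hupper : ∀ A', MeasurableSet A' → memOn μ H x t A' → μ (A' \ S) = 0 := by
    intro A' hA'm hA'mem
    set F : ℕ → Set Ω := fun n => Nat.casesOn n A' A with hF
    have hFmeas : ∀ n, MeasurableSet (F n) := by
      intro n; cases n with
      | zero => exact hA'm
      | succ m => exact (hPA m).1
    have hFmem : ∀ n, memOn μ H x t (F n) := by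
      intro n; cases n with
      | zero => exact hA'mem
      | succ m => exact (hPA m).2
    have hFU : (⋃ n, F n) = A' ∪ S := by
      apply Set.Subset.antisymm
      · refine Set.iUnion_subset fun n => ?_
        cases n with
        | zero => exact Set.subset_union_left
        | succ m => exact (Set.subset_iUnion A m).trans Set.subset_union_right
      · intro ω hω
        rcases hω with h | h
        · exact Set.mem_iUnion.2 ⟨0, h⟩
        · obtain ⟨m, hm⟩ := Set.mem_iUnion.1 h
          exact Set.mem_iUnion.2 ⟨m + 1, hm⟩
    have hUmem : memOn μ H x t (A' ∪ S) := by
      rw [← hFU]; exact memOn_iUnion hH hFmeas hFmem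
    have hUc : ν (A' ∪ S) ≤ c := hle _ ⟨hA'm.union hSmeas, hUmem⟩
    have hdisj : Disjoint S (A' \ S) := Set.disjoint_sdiff_right
    have hkey : ν S + ν (A' \ S) ≤ ν S + 0 := by
      rw [add_zero]
      calc ν S + ν (A' \ S) = ν (S ∪ (A' \ S)) :=
            (measure_union hdisj (hA'm.diff hSmeas)).symm
        _ = ν (A' ∪ S) := by rw [Set.union_diff_self, Set.union_comm]
        _ ≤ c := hUc
        _ ≤ ν S := hcS
    have := (ENNReal.add_le_add_iff_left (measure_ne_top ν S)).1 hkey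
    exact hμν (le_antisymm (by simpa using this) zero_le)
  have hES : μ (E \ S) = 0 := hlub S hSmeas hupper
  obtain ⟨q, hqH, hq1, hq2⟩ := hSmem
  have hnm : ∀ᵐ ω ∂μ, ω ∉ E \ S := measure_eq_zero_iff_ae_notMem.1 hES
  refine ⟨q, hqH, ?_, ?_⟩
  · filter_upwards [hq1, hnm] with ω h1 h2 hωE
    have hωS : ω ∈ S := by
      by_contra hns
      exact h2 ⟨hωE, hns⟩
    exact h1 hωS
  · filter_upwards [hq2, hnm] with ω h1 h2 hωE
    have hωS : ω ∈ S := by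
      by_contra hns
      exact h2 ⟨hωE, hns⟩
    exact h1 hωS
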